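/- If L is a dense weakly 2-entangled linear order, then the lexicographic product M = L × 2 is weakly 2-entangled but not 2-entangled. -/

import Mathlib

noncomputable def omega1 : Ordinal.{0} := (Cardinal.aleph 1).ord

/-- A linear order has the countable chain condition if there is no uncountable
family of pairwise disjoint nonempty open intervals. -/
def CCC (L : Type*) [LinearOrder L] : Prop :=
  ¬ ∃ I : Set (L × L), ¬ I.Countable ∧
    (∀ p ∈ I, ∃ c, p.1 < c ∧ c < p.2) ∧
    (∀ p ∈ I, ∀ r ∈ I, p ≠ r →
      ¬ ∃ c, (p.1 < c ∧ c < p.2) ∧ (r.1 < c ∧ c < r.2))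

/-- Separability: a countable set meeting every nonempty open interval. -/
def SeparableOrder (L : Type*) [LinearOrder L] : Prop :=
  ∃ D : Set L, D.Countable ∧ ∀ a b : L, a < b → (∃ c, a < c ∧ c < b) →
    ∃ d ∈ D, a < d ∧ d < b

/-- The first `n` coordinates of `t` form an increasing tuple. -/
def IncreasingTuple {L : Type*} [LinearOrder L] (n : ℕ) (t : ℕ → L) : Prop :=
  ∀ i j : ℕ, i < j → j < n → t i < t j

/-- The `n`-tuples of the sequence `a` (indexed by ordinals `< ω₁`) are pairwise
disjoint: no coordinate of one tuple equals any coordinate of another. -/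
def DisjointSeq {L : Type*} [LinearOrder L] (n : ℕ) (a : Ordinal → ℕ → L) : Prop :=
  ∀ ξ, ξ < omega1 → ∀ δ, δ < omega1 → ξ ≠ δ →
    ∀ i, i < n → ∀ j, j < n → a ξ i ≠ a δ j

/-- The sequence of `n`-tuples `a` realizes the type `g`. -/
def RealizesType {L : Type*} [LinearOrder L] (n : ℕ) (a : Ordinal → ℕ → L)
    (g : ℕ → Bool) : Prop :=
  ∃ ξ, ξ < omega1 ∧ ∃ δ, δ < omega1 ∧ ∀ i, i < n → (a ξ i < a δ i ↔ g i = true)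

/-- `L` is `n`-entangled. -/
def Entangled (L : Type*) [LinearOrder L] (n : ℕ) : Prop :=
  ∀ a : Ordinal → ℕ → L, (∀ ξ, ξ < omega1 → IncreasingTuple n (a ξ)) →
    DisjointSeq n a → ∀ g : ℕ → Bool, RealizesType n a g

/-- The sequence of increasing `n`-tuples is separated: there are
`c 0, …, c (n-2)` with `a ξ i < c i < a ξ (i+1)` for all `ξ < ω₁`. -/
def SeparatedSeq {L : Type*} [LinearOrder L] (n : ℕ) (a : Ordinal → ℕ → L) : Prop :=
  ∃ c : ℕ → L, ∀ ξ, ξ < omega1 → ∀ i, i + 1 < n →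
    a ξ i < c i ∧ c i < a ξ (i + 1)

/-- `L` is weakly `n`-entangled. -/
def WeaklyEntangled (L : Type*) [LinearOrder L] (n : ℕ) : Prop :=
  ∀ a : Ordinal → ℕ → L, (∀ ξ, ξ < omega1 → IncreasingTuple n (a ξ)) →
    DisjointSeq n a → SeparatedSeq n a → ∀ g : ℕ → Bool, RealizesType n a g

open Cardinal Set

lemma mk_Iio_omega1 : #(Iio omega1) = Cardinal.lift.{1,0} (Cardinal.aleph 1) := by
  rw [omega1, Ordinal.mk_Iio_ordinal, Cardinal.card_ord]

lemma Iio_omega1_not_countable : ¬ (Iio omega1).Countable := by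
  rw [← Cardinal.le_aleph0_iff_set_countable, mk_Iio_omega1, ← succ_aleph0,
    Cardinal.lift_succ, Cardinal.lift_aleph0]
  simp only [not_le]
  exact Order.lt_succ _

lemma embed_of_not_countable {S : Set Ordinal.{0}} (hS : ¬ S.Countable) :
    Nonempty (↥(Iio omega1) ↪ ↥S) := by
  rw [← Cardinal.le_def, mk_Iio_omega1, ← succ_aleph0, Cardinal.lift_succ, Cardinal.lift_aleph0]
  rw [← Cardinal.le_aleph0_iff_set_countable, not_le] at hS
  exact Order.succ_le_iff.mpr hS

lemma embed_into_L (L : Type*) [Uncountable L] : Nonempty (↥(Iio omega1) ↪ L) := by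
  rw [← Cardinal.lift_mk_le', mk_Iio_omega1, ← succ_aleph0]
  simp only [Cardinal.lift_succ, Cardinal.lift_aleph0, Cardinal.lift_lift]
  exact Order.succ_le_iff.mpr (by simpa using Cardinal.aleph0_lt_mk L)

lemma fin2_absurd (m e n : Fin 2) (h1 : m < e) (h2 : e < n) : False := by omega

lemma omega1_pos : (0 : Ordinal) < omega1 :=
  lt_of_lt_of_le Ordinal.omega0_pos (by rw [← Cardinal.ord_aleph0]; exact Cardinal.ord_le_ord.2 Cardinal.aleph0_lt_aleph_one.le)

lemma part2 (L : Type*) [LinearOrder L] [Uncountable L] : ¬ Entangled (Lex (L × Fin 2)) 2 := by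
  intro hent
  obtain ⟨f⟩ := embed_into_L L
  set x : Ordinal → L := fun ξ => if h : ξ < omega1 then f ⟨ξ, h⟩ else f ⟨0, omega1_pos⟩ with hx
  have hxinj : ∀ ξ, ξ < omega1 → ∀ δ, δ < omega1 → ξ ≠ δ → x ξ ≠ x δ := by
    intro ξ hξ δ hδ hne
    simp only [hx, dif_pos hξ, dif_pos hδ]
    intro heq
    exact hne (by simpa using Subtype.ext_iff.mp (f.injective heq))
  set a : Ordinal → ℕ → Lex (L × Fin 2) :=
    fun ξ i => toLex (x ξ, if i = 0 then (0 : Fin 2) else 1) with ha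
  have hinc : ∀ ξ, ξ < omega1 → IncreasingTuple 2 (a ξ) := by
    intro ξ _ i j hij hj
    have hi : i = 0 := by omega
    have hj1 : j = 1 := by omega
    subst hi; subst hj1
    refine (Prod.Lex.lt_iff).mpr (Or.inr ⟨rfl, ?_⟩)
    simp [ha]
  have hdisj : DisjointSeq 2 a := by
    intro ξ hξ δ hδ hne i _ j _
    simp only [ha]
    intro heq
    exact hxinj ξ hξ δ hδ hne (congrArg (fun z => (ofLex z).1) heq)
  obtain ⟨ξ, hξ, δ, hδ, hg⟩ := hent a hinc hdisj (fun i => decide (i = 0))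
  have h0 : a ξ 0 < a δ 0 := (hg 0 (by norm_num)).mpr (by simp)
  have hlt : x ξ < x δ := by
    rcases (Prod.Lex.lt_iff).mp h0 with h | ⟨_, h⟩
    · exact h
    · exact absurd h (by simp [ha])
  have h1 : a ξ 1 < a δ 1 := (Prod.Lex.lt_iff).mpr (Or.inl hlt)
  have := (hg 1 (by norm_num)).mp h1
  simp at this

lemma part1 (L : Type*) [LinearOrder L] (h : WeaklyEntangled L 2) :
    WeaklyEntangled (Lex (L × Fin 2)) 2 := by
  intro a hinc hdisj hsep g
  obtain ⟨c, hc⟩ := hsep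
  set P : Ordinal → L := fun ξ => (ofLex (a ξ 0)).1 with hP
  set Q : Ordinal → L := fun ξ => (ofLex (a ξ 1)).1 with hQ
  set m : Ordinal → Fin 2 := fun ξ => (ofLex (a ξ 0)).2 with hm
  set n : Ordinal → Fin 2 := fun ξ => (ofLex (a ξ 1)).2 with hn
  set c0 : L := (ofLex (c 0)).1 with hc0
  set e : Fin 2 := (ofLex (c 0)).2 with he
  have hPc : ∀ ξ, ξ < omega1 → P ξ < c0 ∨ (P ξ = c0 ∧ m ξ < e) := fun ξ hξ =>
    (Prod.Lex.lt_iff).mp (hc ξ hξ 0 (by norm_num)).1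
  have hcQ : ∀ ξ, ξ < omega1 → c0 < Q ξ ∨ (c0 = Q ξ ∧ e < n ξ) := fun ξ hξ =>
    (Prod.Lex.lt_iff).mp (hc ξ hξ 0 (by norm_num)).2
  have hPQ : ∀ ξ, ξ < omega1 → ∀ δ, δ < omega1 → P ξ < Q δ := by
    intro ξ hξ δ hδ
    rcases hPc ξ hξ with h1 | ⟨h1, h1'⟩ <;> rcases hcQ δ hδ with h2 | ⟨h2, h2'⟩
    · exact h1.trans h2
    · exact h2 ▸ h1
    · exact h1 ▸ h2
    · exact absurd (fin2_absurd _ _ _ h1' h2') not_false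
  have hBP : {ξ | ξ < omega1 ∧ P ξ = c0}.Subsingleton := by
    rintro ξ ⟨hξ, hPξ⟩ δ ⟨hδ, hPδ⟩
    by_contra hne
    have h1 := (hPc ξ hξ).resolve_left (by rw [hPξ]; exact lt_irrefl _)
    have h2 := (hPc δ hδ).resolve_left (by rw [hPδ]; exact lt_irrefl _)
    have hmeq : m ξ = m δ := by have := h1.2; have := h2.2; omega
    exact hdisj ξ hξ δ hδ hne 0 (by norm_num) 0 (by norm_num)
      (ofLex.injective (Prod.ext (hPξ.trans hPδ.symm) hmeq))
  have hBQ : {ξ | ξ < omega1 ∧ Q ξ = c0}.Subsingleton := by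
    rintro ξ ⟨hξ, hQξ⟩ δ ⟨hδ, hQδ⟩
    by_contra hne
    have h1 := (hcQ ξ hξ).resolve_left (by rw [hQξ]; exact lt_irrefl _)
    have h2 := (hcQ δ hδ).resolve_left (by rw [hQδ]; exact lt_irrefl _)
    have hneq : n ξ = n δ := by have := h1.2; have := h2.2; omega
    exact hdisj ξ hξ δ hδ hne 1 (by norm_num) 1 (by norm_num)
      (ofLex.injective (Prod.ext (hQξ.trans hQδ.symm) hneq))
  set T : Fin 2 × Fin 2 → Set Ordinal.{0} :=
    fun k => {ξ | ξ < omega1 ∧ m ξ = k.1 ∧ n ξ = k.2 ∧ P ξ ≠ c0 ∧ Q ξ ≠ c0} with hT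
  have hTk : ∃ k, ¬ (T k).Countable := by
    by_contra hall
    push_neg at hall
    apply Iio_omega1_not_countable
    have hsub : Set.Iio omega1 ⊆ (⋃ k, T k) ∪
        ({ξ | ξ < omega1 ∧ P ξ = c0} ∪ {ξ | ξ < omega1 ∧ Q ξ = c0}) := by
      intro ξ hξ
      by_cases h1 : P ξ = c0
      · exact Or.inr (Or.inl ⟨hξ, h1⟩)
      by_cases h2 : Q ξ = c0
      · exact Or.inr (Or.inr ⟨hξ, h2⟩)
      exact Or.inl (Set.mem_iUnion.mpr ⟨(m ξ, n ξ), hξ, rfl, rfl, h1, h2⟩)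
    exact (((Set.countable_iUnion hall).union
      (hBP.countable.union hBQ.countable)).mono hsub)
  obtain ⟨k, hk⟩ := hTk
  obtain ⟨f⟩ := embed_of_not_countable hk
  set φ : Ordinal → Ordinal :=
    fun ξ => if h : ξ < omega1 then ((f ⟨ξ, h⟩ : ↥(T k)) : Ordinal) else 0 with hφ
  have hφT : ∀ ξ, ξ < omega1 → φ ξ ∈ T k := by
    intro ξ hξ; simp only [hφ, dif_pos hξ]; exact (f ⟨ξ, hξ⟩).2
  have hφinj : ∀ ξ, ξ < omega1 → ∀ δ, δ < omega1 → ξ ≠ δ → φ ξ ≠ φ δ := by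
    intro ξ hξ δ hδ hne heq
    apply hne
    simp only [hφ, dif_pos hξ, dif_pos hδ] at heq
    simpa using Subtype.ext_iff.mp (f.injective (Subtype.ext heq))
  set b : Ordinal → ℕ → L := fun ξ i => if i = 0 then P (φ ξ) else Q (φ ξ) with hb
  have hbinc : ∀ ξ, ξ < omega1 → IncreasingTuple 2 (b ξ) := by
    intro ξ hξ i j hij hj
    have hi0 : i = 0 := by omega
    have hj1 : j = 1 := by omega
    subst hi0; subst hj1
    show P (φ ξ) < Q (φ ξ)
    exact hPQ _ (hφT ξ hξ).1 _ (hφT ξ hξ).1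
  have hbdisj : DisjointSeq 2 b := by
    intro ξ hξ δ hδ hne i hi j hj
    obtain ⟨hφξ, hmξ, hnξ, hPξ, hQξ⟩ := hφT ξ hξ
    obtain ⟨hφδ, hmδ, hnδ, hPδ, hQδ⟩ := hφT δ hδ
    have hφne := hφinj ξ hξ δ hδ hne
    have hi2 : i = 0 ∨ i = 1 := by omega
    have hj2 : j = 0 ∨ j = 1 := by omega
    rcases hi2 with rfl | rfl <;> rcases hj2 with rfl | rfl
    · show P (φ ξ) ≠ P (φ δ)
      intro heq
      exact hdisj _ hφξ _ hφδ hφne 0 (by norm_num) 0 (by norm_num)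
        (ofLex.injective (Prod.ext heq (hmξ.trans hmδ.symm)))
    · exact (hPQ _ hφξ _ hφδ).ne
    · exact (hPQ _ hφδ _ hφξ).ne'
    · show Q (φ ξ) ≠ Q (φ δ)
      intro heq
      exact hdisj _ hφξ _ hφδ hφne 1 (by norm_num) 1 (by norm_num)
        (ofLex.injective (Prod.ext heq (hnξ.trans hnδ.symm)))
  have hbsep : SeparatedSeq 2 b := by
    refine ⟨fun _ => c0, fun ξ hξ i hi => ?_⟩
    have hi0 : i = 0 := by omega
    subst hi0
    obtain ⟨hφξ, _, _, hPξ, hQξ⟩ := hφT ξ hξ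
    constructor
    · show P (φ ξ) < c0
      exact ((hPc _ hφξ).resolve_right (fun hh => hPξ hh.1))
    · show c0 < Q (φ ξ)
      exact ((hcQ _ hφξ).resolve_right (fun hh => hQξ hh.1.symm))
  obtain ⟨ξ, hξ, δ, hδ, hg⟩ := h b hbinc hbdisj hbsep g
  obtain ⟨hφξ, hmξ, hnξ, -, -⟩ := hφT ξ hξ
  obtain ⟨hφδ, hmδ, hnδ, -, -⟩ := hφT δ hδ
  refine ⟨φ ξ, hφξ, φ δ, hφδ, ?_⟩
  intro i hi
  have hi2 : i = 0 ∨ i = 1 := by omega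
  rcases hi2 with rfl | rfl
  · rw [← hg 0 (by norm_num)]
    show a (φ ξ) 0 < a (φ δ) 0 ↔ P (φ ξ) < P (φ δ)
    rw [show a (φ ξ) 0 < a (φ δ) 0 ↔ _ from Prod.Lex.lt_iff]
    constructor
    · rintro (hh | ⟨-, hh⟩)
      · exact hh
      · exact absurd (show m (φ ξ) < m (φ δ) from hh) (by rw [hmξ, hmδ]; exact lt_irrefl _)
    · exact Or.inl
  · rw [← hg 1 (by norm_num)]
    show a (φ ξ) 1 < a (φ δ) 1 ↔ Q (φ ξ) < Q (φ δ)
    rw [show a (φ ξ) 1 < a (φ δ) 1 ↔ _ from Prod.Lex.lt_iff]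
    constructor
    · rintro (hh | ⟨-, hh⟩)
      · exact hh
      · exact absurd (show n (φ ξ) < n (φ δ) from hh) (by rw [hnξ, hnδ]; exact lt_irrefl _)
    · exact Or.inl

/-- if `L` is a dense weakly 2-entangled (uncountable) linear order, then
the lexicographic product `M = L × 2` is weakly 2-entangled but not 2-entangled. -/
theorem stmt5 (L : Type*) [LinearOrder L] [Uncountable L] [DenselyOrdered L]
    (h : WeaklyEntangled L 2) :
    WeaklyEntangled (Lex (L × Fin 2)) 2 ∧ ¬ Entangled (Lex (L × Fin 2)) 2 :=
  ⟨part1 L h, part2 L⟩
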